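/- Let p be a prime, q = p^h, K the algebraic closure of 𝔽_p, λ ∈ K with λ^h = −1, and d a positive divisor of q+1. Then the polynomial Y^{(q+1)/d} − Σ_{i=1}^{h} λ^{i−1} X^{q/p^i} is irreducible in K[X,Y]; that is, the plane curve y^{(q+1)/d} = Σ_{i=1}^{h} λ^{i−1} x^{q/p^i} is absolutely irreducible. -/

import Mathlib

open Polynomial

theorem aux_kummer {F : Type*} [Field F] (n : ℕ) (hn : 0 < n) (a : F) (ha0 : a ≠ 0)
    (hroot : ∀ ζ : AlgebraicClosure F, ζ ^ n = 1 → ∃ c : F, algebraMap F (AlgebraicClosure F) c = ζ)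
    (ha : ∀ ℓ : ℕ, ℓ.Prime → ℓ ∣ n → ∀ b : F, b ^ ℓ ≠ a) :
    Irreducible (Polynomial.X ^ n - Polynomial.C a) := by
  set P : F[X] := X ^ n - C a with hP
  have hPm : P.Monic := monic_X_pow_sub_C a hn.ne'
  have hPd : P.natDegree = n := natDegree_X_pow_sub_C
  by_contra hirr
  have hPu : ¬ IsUnit P := by
    intro hu
    have := natDegree_eq_zero_of_isUnit hu
    omega
  obtain ⟨g, hgm, hgi, hgd⟩ := P.exists_monic_irreducible_factor hPu
  have hk1 : 1 ≤ g.natDegree := hgi.natDegree_pos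
  have hkn : g.natDegree < n := by
    rcases lt_or_eq_of_le (natDegree_le_of_dvd hgd hPm.ne_zero) with h | h
    · omega
    · exact absurd ((associated_of_dvd_of_natDegree_le hgd hPm.ne_zero
        (by omega)).irreducible hgi) hirr
  -- move to the algebraic closure
  set Ω := AlgebraicClosure F
  set ι := algebraMap F Ω with hι
  have hιinj : Function.Injective ι := (algebraMap F Ω).injective
  set k := g.natDegree with hk
  have hgΩm : (g.map ι).Monic := hgm.map ι
  obtain ⟨α, hα⟩ := IsAlgClosed.exists_root (g.map ι)
    (by rw [degree_map]; intro hc; rw [degree_eq_natDegree hgm.ne_zero] at hc;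
        exact_mod_cast (by omega : (k:ℤ) ≠ 0) (by exact_mod_cast hc))
  -- α is a root of P, i.e. α ^ n = ι a
  have hroots_pow : ∀ β : Ω, (P.map ι).IsRoot β → β ^ n = ι a := by
    intro β hβ
    have := hβ
    rw [hP, Polynomial.map_sub, Polynomial.map_pow, map_X, map_C, IsRoot.def,
      eval_sub, eval_pow, eval_X, eval_C, sub_eq_zero] at this
    exact this
  have hαP : (P.map ι).IsRoot α := by
    obtain ⟨t, ht⟩ := hgd
    rw [ht, Polynomial.map_mul, IsRoot.def, eval_mul, hα.eq_zero, zero_mul]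
  have hαn : α ^ n = ι a := hroots_pow α hαP
  have hα0 : α ≠ 0 := by
    intro hc
    rw [hc, zero_pow hn.ne'] at hαn
    exact ha0 (hιinj (by simpa using hαn.symm))
  -- product of the roots of g over Ω
  have hsplits : (g.map ι).Splits := IsAlgClosed.splits (g.map ι)
  have hcard : (g.map ι).roots.card = k := by
    rw [(splits_iff_card_roots).mp hsplits, natDegree_map]
  have hcoeff0 : (g.map ι).coeff 0 = (-1) ^ k * (g.map ι).roots.prod := by
    rw [hsplits.coeff_zero_eq_prod_roots_of_monic hgΩm, natDegree_map]
  have hrootsP : ∀ r ∈ (g.map ι).roots, r ^ n = ι a := by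
    intro r hr
    refine hroots_pow r ?_
    have hr' : (g.map ι).IsRoot r := isRoot_of_mem_roots hr
    obtain ⟨t, ht⟩ := hgd
    rw [ht, Polynomial.map_mul, IsRoot.def, eval_mul, hr'.eq_zero, zero_mul]
  have hroots0 : ∀ r ∈ (g.map ι).roots, r ≠ 0 := by
    intro r hr hc
    have := hrootsP r hr
    rw [hc, zero_pow hn.ne'] at this
    exact ha0 (hιinj (by simpa using this.symm))
  -- each quotient r / α is an n-th root of unity, hence comes from F
  have hquot : ∀ r ∈ (g.map ι).roots, ∃ c : F, ι c = r / α := by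
    intro r hr
    refine hroot _ ?_
    rw [div_pow, hrootsP r hr, hαn, div_self (by rw [← hαn]; exact pow_ne_zero n hα0)]
  -- the product of quotients lies in the range of ι
  have hmem : ((g.map ι).roots.map (· / α)).prod ∈ (ι : F →+* Ω).fieldRange := by
    refine Subfield.multiset_prod_mem _ _ ?_
    intro x hx
    obtain ⟨r, hr, rfl⟩ := Multiset.mem_map.mp hx
    obtain ⟨c, hc⟩ := hquot r hr
    exact ⟨c, hc⟩
  obtain ⟨c, hc⟩ := hmem
  -- roots.prod = c * α ^ k
  have hprod : (g.map ι).roots.prod = ι c * α ^ k := by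
    have h1 : (g.map ι).roots.map (fun r => (r / α) * α) = (g.map ι).roots.map id := by
      refine Multiset.map_congr rfl ?_
      intro r _
      simp [div_mul_cancel₀ _ hα0]
    calc (g.map ι).roots.prod = ((g.map ι).roots.map (fun r => (r / α) * α)).prod := by
          rw [h1, Multiset.map_id]
      _ = ((g.map ι).roots.map (· / α)).prod * ((g.map ι).roots.map (fun _ => α)).prod := by
          rw [Multiset.prod_map_mul]
      _ = ι c * α ^ k := by rw [hc, Multiset.map_const', Multiset.prod_replicate, hcard]
  have hc0 : c ≠ 0 := by
    intro hc0
    rw [hc0, map_zero, zero_mul] at hprod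
    exact Multiset.prod_ne_zero (fun h0 => hroots0 0 h0 rfl) hprod
  -- α ^ k is in the image of F
  set u : F := (-1 : F) ^ k * g.coeff 0 * c⁻¹ with hu
  have hαk : ι u = α ^ k := by
    have h2 : ι (g.coeff 0) = (-1) ^ k * (ι c * α ^ k) := by
      rw [← hprod, ← hcoeff0, coeff_map]
    have hc0' : ι c ≠ 0 := fun e => hc0 (hιinj (by simpa using e))
    calc ι u = ((-1) ^ k * (-1) ^ k) * (ι c * (ι c)⁻¹) * α ^ k := by
          rw [hu, map_mul, map_mul, map_pow, map_neg, map_one, map_inv₀, h2]; ring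
      _ = α ^ k := by
          rw [← pow_add, Even.neg_one_pow ⟨k, rfl⟩, mul_inv_cancel₀ hc0', one_mul, one_mul]
  have hu0 : u ≠ 0 := by
    intro hc0
    rw [hc0, map_zero] at hαk
    exact pow_ne_zero k hα0 hαk.symm
  -- Bezout
  set dd := Nat.gcd k n with hdd
  have hdd1 : 0 < dd := Nat.gcd_pos_of_pos_right k hn
  have hddn : dd ∣ n := Nat.gcd_dvd_right k n
  have hddlt : dd < n := lt_of_le_of_lt (Nat.le_of_dvd (by omega) (Nat.gcd_dvd_left k n)) hkn
  set x := Nat.gcdA k n with hx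
  set y := Nat.gcdB k n with hy
  have hbezout : (dd : ℤ) = k * x + n * y := Nat.gcd_eq_gcd_ab k n
  set b : F := u ^ x * a ^ y with hb
  have hιb : ι b = α ^ (dd : ℤ) := by
    rw [hb, map_mul, map_zpow₀, map_zpow₀, hαk, ← hαn, hbezout,
      zpow_add₀ hα0, ← zpow_natCast α k, ← zpow_natCast α n, ← zpow_mul, ← zpow_mul]
  have hbpow : b ^ (n / dd) = a := by
    apply hιinj
    rw [map_pow, hιb, ← zpow_natCast (α ^ (dd:ℤ)), ← zpow_mul, ← hαn, ← zpow_natCast α n]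
    congr 1
    have : dd * (n / dd) = n := Nat.mul_div_cancel' hddn
    exact_mod_cast this
  have hnd1 : n / dd ≠ 1 := by
    intro hc1
    have := Nat.mul_div_cancel' hddn
    rw [hc1, mul_one] at this
    omega
  have hℓ : (n / dd).minFac.Prime := Nat.minFac_prime hnd1
  refine ha (n / dd).minFac hℓ (dvd_trans (Nat.minFac_dvd _) (Nat.div_dvd_of_dvd hddn))
    (b ^ (n / dd / (n / dd).minFac)) ?_
  rw [← pow_mul, Nat.div_mul_cancel (Nat.minFac_dvd _), hbpow]

theorem aux_main {K : Type} [Field K] [IsAlgClosed K] (n : ℕ) (hn : 0 < n) (f : Polynomial K)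
    (hf : f.Monic) (hcop : Nat.Coprime n f.natDegree) :
    Irreducible ((Polynomial.X : Polynomial (Polynomial K)) ^ n - Polynomial.C f) := by
  set F := FractionRing (Polynomial K)
  have hmon : ((Polynomial.X : Polynomial (Polynomial K)) ^ n - Polynomial.C f).Monic :=
    monic_X_pow_sub_C f hn.ne'
  rw [hmon.irreducible_iff_irreducible_map_fraction_map (K := F)]
  rw [Polynomial.map_sub, Polynomial.map_pow, map_X, map_C]
  have hinj : Function.Injective (algebraMap (Polynomial K) F) :=
    IsFractionRing.injective (Polynomial K) F
  set a : F := algebraMap (Polynomial K) F f with hadef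
  have ha0 : a ≠ 0 := fun hc => hf.ne_zero (hinj (show _ = algebraMap (Polynomial K) F 0 by
    rw [map_zero]; exact hc))
  refine aux_kummer n hn a ha0 ?_ ?_
  · -- all n-th roots of unity in Ω come from F (in fact from K)
    intro ζ hζ
    set ψ : K →+* AlgebraicClosure F := (algebraMap F (AlgebraicClosure F)).comp
      ((algebraMap (Polynomial K) F).comp Polynomial.C) with hψ
    have hψinj : Function.Injective ψ := ψ.injective
    have hXn : (X ^ n - 1 : K[X]) ≠ 0 := (monic_X_pow_sub_C 1 hn.ne').ne_zero
    have hsplit : (X ^ n - 1 : K[X]).Splits := IsAlgClosed.splits _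
    have hζroot : ζ ∈ ((X ^ n - 1 : K[X]).map ψ).roots := by
      rw [mem_roots']
      refine ⟨fun hc => hXn (by rwa [Polynomial.map_eq_zero_iff hψinj] at hc), ?_⟩
      rw [IsRoot.def, Polynomial.map_sub, Polynomial.map_pow, map_X, Polynomial.map_one,
          eval_sub, eval_pow, eval_X, eval_one, hζ, sub_self]
    rw [hsplit.roots_map ψ, Multiset.mem_map] at hζroot
    obtain ⟨r, _, hr⟩ := hζroot
    exact ⟨algebraMap (Polynomial K) F (Polynomial.C r), hr⟩
  · -- f is not an ℓ-th power in F for any prime ℓ ∣ n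
    intro ℓ hℓ hℓn b hb
    have hbint : IsIntegral (Polynomial K) b := by
      refine ⟨X ^ ℓ - C f, monic_X_pow_sub_C f hℓ.pos.ne', ?_⟩
      rw [eval₂_sub, eval₂_pow, eval₂_X, eval₂_C, hb, sub_self]
    obtain ⟨c, hc⟩ := IsIntegrallyClosed.isIntegral_iff.mp hbint
    have hcf : c ^ ℓ = f := hinj (by rw [map_pow, hc, hb])
    have hdvd : ℓ ∣ f.natDegree := ⟨c.natDegree, by rw [← hcf, natDegree_pow]⟩
    have : ℓ ∣ 1 := Nat.dvd_gcd hℓn hdvd |>.trans hcop.dvd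
    exact hℓ.one_lt.ne' (Nat.dvd_one.mp this)


/-- Let `p` be a prime, `q = p^h`, `K` the algebraic closure of `𝔽_p`
(formalized: an algebraically closed field of characteristic `p`),
`λ ∈ K` with `λ^h = -1`, and `d` a positive divisor of `q+1`.  Then the polynomial
`Y^((q+1)/d) - ∑_{i=1}^h λ^(i-1) X^(q/p^i)` is irreducible in `K[X,Y]`;
that is, the plane curve `y^((q+1)/d) = ∑ λ^(i-1) x^(q/p^i)` is absolutely irreducible.
(Here `q/p^i = p^(h-i)`.) -/
theorem stmt_9 (p : ℕ) (hp : p.Prime) (h : ℕ) (hh : 1 ≤ h) (q : ℕ) (hq : q = p ^ h)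
    (K : Type) [Field K] [IsAlgClosed K] [CharP K p]
    (lam : K) (hlam : lam ^ h = -1)
    (d : ℕ) (hd0 : 0 < d) (hd : d ∣ q + 1) :
    Irreducible ((MvPolynomial.X 1 : MvPolynomial (Fin 2) K) ^ ((q + 1) / d)
      - ∑ i ∈ Finset.Icc 1 h,
          MvPolynomial.C (lam ^ (i - 1)) * (MvPolynomial.X 0 : MvPolynomial (Fin 2) K) ^ (p ^ (h - i))) := by
  set n := (q + 1) / d with hndef
  have hn : 0 < n := Nat.div_pos (Nat.le_of_dvd (by omega) hd) hd0
  -- the polynomial f(X) = ∑ λ^(i-1) X^(p^(h-i))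
  set f : Polynomial K := ∑ i ∈ Finset.Icc 1 h,
    Polynomial.C (lam ^ (i - 1)) * Polynomial.X ^ (p ^ (h - i)) with hfdef
  have hcoeff : f.coeff (p ^ (h - 1)) = 1 := by
    rw [hfdef, Polynomial.finset_sum_coeff]
    rw [Finset.sum_eq_single 1]
    · simp [Polynomial.coeff_C_mul, Polynomial.coeff_X_pow]
    · intro i hi hi1
      rw [Polynomial.coeff_C_mul, Polynomial.coeff_X_pow, if_neg, mul_zero]
      intro hc
      have := Nat.pow_right_injective hp.two_le hc
      simp only [Finset.mem_Icc] at hi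
      omega
    · intro hc
      exact absurd (Finset.mem_Icc.mpr ⟨le_refl 1, hh⟩) hc
  have hdegle : f.natDegree ≤ p ^ (h - 1) := by
    rw [hfdef]
    refine Polynomial.natDegree_sum_le_of_forall_le _ _ ?_
    intro i hi
    refine le_trans (Polynomial.natDegree_C_mul_le _ _) ?_
    rw [Polynomial.natDegree_X_pow]
    exact Nat.pow_le_pow_right hp.pos (by simp only [Finset.mem_Icc] at hi; omega)
  have hfm : f.Monic := Polynomial.monic_of_natDegree_le_of_coeff_eq_one _ hdegle hcoeff
  have hfd : f.natDegree = p ^ (h - 1) :=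
    le_antisymm hdegle (Polynomial.le_natDegree_of_ne_zero (by rw [hcoeff]; exact one_ne_zero))
  -- coprimality
  have hpq : ¬ p ∣ q + 1 := by
    intro hdvd
    have h1 : p ∣ q := by rw [hq]; exact dvd_pow_self p (by omega)
    have := Nat.dvd_sub hdvd h1
    simp only [Nat.add_sub_cancel_left] at this
    exact hp.one_lt.ne' (Nat.dvd_one.mp this)
  have hcop : Nat.Coprime n (p ^ (h - 1)) := by
    refine Nat.Coprime.pow_right _ ?_
    exact Nat.Coprime.coprime_dvd_left (Nat.div_dvd_of_dvd hd)
      ((hp.coprime_iff_not_dvd.mpr hpq).symm)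
  have key : Irreducible ((Polynomial.X : Polynomial (Polynomial K)) ^ n - Polynomial.C f) :=
    aux_main n hn f hfm (by rw [hfd]; exact hcop)
  -- the algebra equivalence K[x,y] ≃ K[X][Y]
  let e4 : MvPolynomial (Fin 1) K ≃ₐ[K] Polynomial K :=
    (MvPolynomial.finSuccEquiv K 0).trans
      (Polynomial.mapAlgEquiv (MvPolynomial.isEmptyAlgEquiv K (Fin 0)))
  let e : MvPolynomial (Fin 2) K ≃ₐ[K] Polynomial (Polynomial K) :=
    (MvPolynomial.renameEquiv K (Equiv.swap 0 1)).trans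
      ((MvPolynomial.finSuccEquiv K 1).trans (Polynomial.mapAlgEquiv e4))
  have hT : e ((MvPolynomial.X 1 : MvPolynomial (Fin 2) K) ^ n
      - ∑ i ∈ Finset.Icc 1 h,
          MvPolynomial.C (lam ^ (i - 1)) * (MvPolynomial.X 0 : MvPolynomial (Fin 2) K) ^ (p ^ (h - i)))
      = (Polynomial.X : Polynomial (Polynomial K)) ^ n - Polynomial.C f := by
    rw [map_sub, map_pow, map_sum, hfdef]
    congr 1
    · congr 1
      show (Polynomial.mapAlgEquiv e4) ((MvPolynomial.finSuccEquiv K 1)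
        ((MvPolynomial.rename (Equiv.swap (0 : Fin 2) 1)) (MvPolynomial.X 1))) = Polynomial.X
      rw [MvPolynomial.rename_X, Equiv.swap_apply_right, MvPolynomial.finSuccEquiv_X_zero]
      simp
    · rw [map_sum]
      refine Finset.sum_congr rfl ?_
      intro i _
      rw [map_mul]
      have h1 : e (MvPolynomial.C (lam ^ (i - 1))) = Polynomial.C (Polynomial.C (lam ^ (i - 1))) := by
        have h0 : (MvPolynomial.C (lam ^ (i - 1)) : MvPolynomial (Fin 2) K)
            = algebraMap K _ (lam ^ (i - 1)) := rfl
        rw [h0, AlgEquiv.commutes]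
        simp [Polynomial.algebraMap_apply]
      have h2 : e (MvPolynomial.X 0 : MvPolynomial (Fin 2) K) = Polynomial.C Polynomial.X := by
        show (Polynomial.mapAlgEquiv e4) ((MvPolynomial.finSuccEquiv K 1)
          ((MvPolynomial.rename (Equiv.swap (0 : Fin 2) 1)) (MvPolynomial.X 0))) = _
        rw [MvPolynomial.rename_X, Equiv.swap_apply_left]
        have h10 : (1 : Fin 2) = (Fin.succ 0) := rfl
        rw [h10, MvPolynomial.finSuccEquiv_X_succ]
        simp [e4, MvPolynomial.finSuccEquiv_X_zero]
      have h3 : e ((MvPolynomial.X 0 : MvPolynomial (Fin 2) K) ^ p ^ (h - i))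
          = Polynomial.C (Polynomial.X ^ p ^ (h - i)) := by
        rw [map_pow e (MvPolynomial.X 0) (p ^ (h - i)), h2, ← Polynomial.C_pow]
      rw [h1, h3, ← Polynomial.C_mul]
  exact (MulEquiv.irreducible_iff (e : MvPolynomial (Fin 2) K ≃* Polynomial (Polynomial K))).mp
    (hT ▸ key)
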